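/- For any constants ε ≤ 1/3 and δ ≤ 1/9, the Hadamard code with the shared-query decoder recovering κ = 2 bits is a (3/2, 2, δ, ε)-amortized LDC: it recovers any 2 requested message bits with 3 queries and failure probability at most 3δ ≤ ε. -/
import Mathlib

lemma symmDiff_sum_aux {k : ℕ} (x : Fin k → ZMod 2) (S : Finset (Fin k)) (j : Fin k) :
    (∑ i ∈ symmDiff S {j}, x i) = (∑ i ∈ S, x i) + x j := by
  by_cases h : j ∈ S
  · have hsd : symmDiff S {j} = S.erase j := by
      ext a
      simp only [Finset.mem_symmDiff, Finset.mem_erase, Finset.mem_singleton]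
      constructor
      · rintro (⟨h1, h2⟩ | ⟨rfl, h2⟩)
        · exact ⟨h2, h1⟩
        · exact absurd h h2
      · rintro ⟨h1, h2⟩; exact Or.inl ⟨h2, h1⟩
    rw [hsd]
    have hs := Finset.add_sum_erase S x h
    have hchar : x j + x j = 0 := CharTwo.add_self_eq_zero _
    linear_combination hs - hchar
  · have hsd : symmDiff S {j} = insert j S := by
      ext a
      simp only [Finset.mem_symmDiff, Finset.mem_insert, Finset.mem_singleton]
      constructor
      · rintro (⟨h1, h2⟩ | ⟨rfl, h2⟩)
        · exact Or.inr h1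
        · exact Or.inl rfl
      · rintro (rfl | h1)
        · exact Or.inr ⟨rfl, h⟩
        · exact Or.inl ⟨h1, fun hh => h (hh ▸ h1)⟩
    rw [hsd, Finset.sum_insert h]
    ring

/-- The Hadamard code with the shared-query decoder recovering `κ = 2` bits is a
`(3/2, 2, δ, ε)`-amortized LDC for constants `ε ≤ 1/3`, `δ ≤ 1/9` (with the
parameter relation `ε ≥ (κ+1)δ = 3δ`): for any received word `ỹ` that is
`δ`-close to the Hadamard encoding of `x` and any query set `Q` of size `2`, the
decoder makes `3 = (3/2)·2` queries and recovers both requested bits with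
probability at least `1 − 3δ ≥ 1 − ε`. -/
theorem hadamard_is_3_2_aLDC (k : ℕ) (δ ε : ℝ) (hε : ε ≤ 1 / 3) (hδ : δ ≤ 1 / 9)
    (hεδ : 3 * δ ≤ ε) (x : Fin k → ZMod 2) (ytilde : Finset (Fin k) → ZMod 2)
    (hclose : ((Finset.univ.filter
        (fun T : Finset (Fin k) => ytilde T ≠ ∑ j ∈ T, x j)).card : ℝ) ≤ δ * 2 ^ k)
    (Q : Finset (Fin k)) (hQ : Q.card = 2) :
    (∀ S : Finset (Fin k),
      (insert S (Q.image (fun j => symmDiff S {j}))).card = 3) ∧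
    (1 - 3 * δ) * 2 ^ k ≤
      ((Finset.univ.filter (fun S : Finset (Fin k) =>
          ∀ j ∈ Q, ytilde S + ytilde (symmDiff S {j}) = x j)).card : ℝ) ∧
    (1 - ε) * 2 ^ k ≤
      ((Finset.univ.filter (fun S : Finset (Fin k) =>
          ∀ j ∈ Q, ytilde S + ytilde (symmDiff S {j}) = x j)).card : ℝ) := by
  set B : Finset (Finset (Fin k)) :=
    Finset.univ.filter (fun T : Finset (Fin k) => ytilde T ≠ ∑ j ∈ T, x j) with hB
  set G : Finset (Finset (Fin k)) :=
    Finset.univ.filter (fun S : Finset (Fin k) =>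
      ∀ j ∈ Q, ytilde S + ytilde (symmDiff S {j}) = x j) with hG
  have main : (1 - 3 * δ) * 2 ^ k ≤ (G.card : ℝ) := by
    set N : Finset (Finset (Fin k)) :=
      Finset.univ.filter (fun S : Finset (Fin k) =>
        ¬ ∀ j ∈ Q, ytilde S + ytilde (symmDiff S {j}) = x j) with hN
    have hsub : N ⊆ B ∪ Q.biUnion (fun j => B.image (fun T => symmDiff T {j})) := by
      intro S hS
      rw [hN, Finset.mem_filter] at hS
      push_neg at hS
      obtain ⟨-, j, hj, hfail⟩ := hS
      rcases Decidable.em (ytilde S = ∑ i ∈ S, x i) with h1 | h1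
      · have h2 : ytilde (symmDiff S {j}) ≠ ∑ i ∈ symmDiff S {j}, x i := by
          intro h2
          apply hfail
          rw [h1, h2, symmDiff_sum_aux, ← add_assoc, CharTwo.add_self_eq_zero, zero_add]
        refine Finset.mem_union_right _ (Finset.mem_biUnion.2 ⟨j, hj, ?_⟩)
        refine Finset.mem_image.2 ⟨symmDiff S {j}, ?_, ?_⟩
        · simp [hB, h2]
        · exact symmDiff_symmDiff_cancel_right {j} S
      · exact Finset.mem_union_left _ (by simp [hB, h1])
    have hNcard : (N.card : ℝ) ≤ 3 * B.card := by
      have h1 : N.card ≤ B.card + (Q.biUnion (fun j => B.image (fun T => symmDiff T {j}))).card :=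
        le_trans (Finset.card_le_card hsub) (Finset.card_union_le _ _)
      have h2 : (Q.biUnion (fun j => B.image (fun T => symmDiff T {j}))).card
          ≤ ∑ j ∈ Q, (B.image (fun T => symmDiff T {j})).card :=
        Finset.card_biUnion_le
      have h3 : ∑ j ∈ Q, (B.image (fun T => symmDiff T {j})).card ≤ ∑ j ∈ Q, B.card :=
        Finset.sum_le_sum fun j _ => Finset.card_image_le
      have h4 : ∑ j ∈ Q, B.card = 2 * B.card := by rw [Finset.sum_const, hQ]; ring
      have : N.card ≤ 3 * B.card := by omega
      exact_mod_cast this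
    have hsplit : G.card + N.card = 2 ^ k := by
      have := Finset.card_filter_add_card_filter_not (s := Finset.univ)
        (p := fun S : Finset (Fin k) =>
          ∀ j ∈ Q, ytilde S + ytilde (symmDiff S {j}) = x j)
      simpa [hG, hN, Fintype.card_finset] using this
    have hsplit' : (G.card : ℝ) + N.card = 2 ^ k := by exact_mod_cast hsplit
    nlinarith [hclose, hNcard]
  refine ⟨?_, main, le_trans (mul_le_mul_of_nonneg_right (by linarith) (by positivity)) main⟩
  intro S
  have hnotmem : S ∉ Q.image (fun j => symmDiff S {j}) := by
    intro h
    obtain ⟨j, -, hj⟩ := Finset.mem_image.1 h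
    have : ({j} : Finset (Fin k)) = ⊥ := by
      have := symmDiff_eq_left.1 hj
      exact this
    simp at this
  rw [Finset.card_insert_of_notMem hnotmem, Finset.card_image_of_injOn, hQ]
  intro a _ b _ hab
  have : ({a} : Finset (Fin k)) = {b} :=
    symmDiff_right_injective S hab
  simpa using this
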